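/- Assume: (i) the Carleson estimate: there is c > 1 such that G(x,y) ≤ c·G(A_r(Q), y) whenever Q ∈ ∂D, r ∈ (0, κR/4), y ∈ D \ closure(B(Q,4r)) and x ∈ D ∩ B(Q,r); (ii) the Harnack condition: for every L > 0 there is a constant c(L) > 0 such that G(x2,y) ≤ c(L)·G(x1,y) whenever y ∈ D and x1, x2 ∈ D \ B(y, ρ_D(y)/2) satisfy |x1 - x2| ≤ L·min(ρ_D(x1), ρ_D(x2)); (iii) the comparability of g on 𝓑: there is c ≥ 1 such that g(A1) ≤ c·g(A2) for all x, y ∈ D and A1, A2 ∈ 𝓑(x,y). Then there exists a constant c > 0 such that for all x, y, z ∈ D with r(x,z) ≤ r(y,z) and all A_{x,y} ∈ 𝓑(x,y), A_{y,z} ∈ 𝓑(y,z): g(A_{x,y}) ≤ c·g(A_{y,z}). -/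

import Mathlib

open Metric Set MeasureTheory

/-- Distance to the boundary of `D`. -/
noncomputable def rho {d : ℕ} (D : Set (EuclideanSpace ℝ (Fin d)))
    (x : EuclideanSpace ℝ (Fin d)) : ℝ :=
  Metric.infDist x (frontier D)

/-- `r(x,y) := max(ρ_D(x), ρ_D(y), |x-y|)`. -/
noncomputable def rxy {d : ℕ} (D : Set (EuclideanSpace ℝ (Fin d)))
    (x y : EuclideanSpace ℝ (Fin d)) : ℝ :=
  max (max (rho D x) (rho D y)) (dist x y)

/-- The set `𝓑(x,y)`. -/
noncomputable def BB {d : ℕ} (D : Set (EuclideanSpace ℝ (Fin d))) (M ε1 : ℝ)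
    (z0 x y : EuclideanSpace ℝ (Fin d)) : Set (EuclideanSpace ℝ (Fin d)) :=
  if rxy D x y < ε1 then
    {A | A ∈ D ∧ rxy D x y / M < rho D A ∧ max (dist x A) (dist y A) < 5 * rxy D x y}
  else {z0}

open Classical in
/-- `g(x) := min(G(x,z0), C1)`, with the convention `g(z0) = C1` (since `G(z0,z0) = ∞`). -/
noncomputable def gfun {d : ℕ} (G : EuclideanSpace ℝ (Fin d) → EuclideanSpace ℝ (Fin d) → ℝ)
    (z0 : EuclideanSpace ℝ (Fin d)) (C1 : ℝ) (x : EuclideanSpace ℝ (Fin d)) : ℝ :=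
  if x = z0 then C1 else min (G x z0) C1

set_option maxHeartbeats 2000000 in
theorem stmt7
    {d : ℕ} (hd : 2 ≤ d)
    {D : Set (EuclideanSpace ℝ (Fin d))} (hDopen : IsOpen D) (hDbdd : Bornology.IsBounded D)
    {κ R : ℝ} (hκ0 : 0 < κ) (hκ2 : κ ≤ 1 / 2) (hR : 0 < R)
    {A : EuclideanSpace ℝ (Fin d) → ℝ → EuclideanSpace ℝ (Fin d)}
    (hfat : ∀ Q ∈ frontier D, ∀ r : ℝ, 0 < r → r < R →
      A Q r ∈ D ∧ ball (A Q r) (κ * r) ⊆ D ∩ ball Q r)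
    {M ε1 : ℝ} (hM : M = 2 / κ) (hε1 : ε1 = R / (12 * M))
    {z0 : EuclideanSpace ℝ (Fin d)} (hz0D : z0 ∈ D)
    (hz0l : 2 * R / M < rho D z0) (hz0u : rho D z0 < R)
    {α : ℝ} (hα0 : 0 < α) (hα2 : α < 2) (hαd : α < d)
    {G : EuclideanSpace ℝ (Fin d) → EuclideanSpace ℝ (Fin d) → ℝ}
    (hGsymm : ∀ x y, G x y = G y x)
    (hGpos : ∀ x ∈ D, ∀ y ∈ D, x ≠ y → 0 < G x y)
    {C0 : ℝ} (hC0 : 1 ≤ C0)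
    (hGup : ∀ x ∈ D, ∀ y ∈ D, x ≠ y → G x y ≤ C0 * dist x y ^ (α - d))
    (hGlow : ∀ x ∈ D, ∀ y ∈ D, x ≠ y → dist x y ≤ rho D y / 2 →
      C0⁻¹ * dist x y ^ (α - d) ≤ G x y)
    {C1 : ℝ} (hC1 : C1 = C0 * (2 : ℝ) ^ ((d : ℝ) - α) * rho D z0 ^ (α - d))
    {Qb : EuclideanSpace ℝ (Fin d) → EuclideanSpace ℝ (Fin d)}
    (hQb : ∀ x ∈ D, Qb x ∈ frontier D ∧ dist x (Qb x) = rho D x)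
    (hCarl : ∃ c > 1, ∀ Q ∈ frontier D, ∀ r : ℝ, 0 < r → r < κ * R / 4 →
      ∀ y ∈ D \ closure (ball Q (4 * r)), ∀ x ∈ D ∩ ball Q r, G x y ≤ c * G (A Q r) y)
    (hHarnack : ∀ L : ℝ, 0 < L → ∃ c > 0, ∀ y ∈ D, ∀ x1 ∈ D \ ball y (rho D y / 2),
      ∀ x2 ∈ D \ ball y (rho D y / 2),
      dist x1 x2 ≤ L * min (rho D x1) (rho D x2) → G x2 y ≤ c * G x1 y)
    (hcomp : ∃ c ≥ 1, ∀ x ∈ D, ∀ y ∈ D, ∀ A1 ∈ BB D M ε1 z0 x y, ∀ A2 ∈ BB D M ε1 z0 x y,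
      gfun G z0 C1 A1 ≤ c * gfun G z0 C1 A2)
 :
    ∃ c > 0, ∀ x ∈ D, ∀ y ∈ D, ∀ z ∈ D, rxy D x z ≤ rxy D y z →
      ∀ Axy ∈ BB D M ε1 z0 x y, ∀ Ayz ∈ BB D M ε1 z0 y z,
      gfun G z0 C1 Axy ≤ c * gfun G z0 C1 Ayz := by
  classical
  obtain ⟨cC, hcC1, hCarl⟩ := hCarl
  have hC0pos : (0:ℝ) < C0 := lt_of_lt_of_le one_pos hC0
  have hMpos : 0 < M := by rw [hM]; positivity
  have hκR : 0 < κ * R := mul_pos hκ0 hR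
  have hε1κ : 24 * ε1 = κ * R := by
    rw [hε1, hM]; field_simp; ring
  have hε1pos : 0 < ε1 := by nlinarith
  have hz0ρ : κ * R < rho D z0 := by
    have h1 : 2 * R < rho D z0 * M := (div_lt_iff₀ hMpos).1 hz0l
    have h2 : M * κ = 2 := by rw [hM]; field_simp
    nlinarith
  have hρz0pos : 0 < rho D z0 := hκR.trans hz0ρ
  have hdivM : ∀ t : ℝ, t / M = κ * t / 2 := by
    intro t; rw [hM]; field_simp
  -- frontier nonempty, basic properties of rho
  set e : EuclideanSpace ℝ (Fin d) := EuclideanSpace.single (⟨0, by omega⟩ : Fin d) (1:ℝ) with he_def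
  have he : ‖e‖ = 1 := by rw [he_def, EuclideanSpace.norm_single]; norm_num
  haveI : Nontrivial (EuclideanSpace ℝ (Fin d)) :=
    ⟨⟨e, 0, fun h => one_ne_zero (by rw [← he, h, norm_zero])⟩⟩
  have hDne : D ≠ univ := fun h => NormedSpace.unbounded_univ ℝ (EuclideanSpace ℝ (Fin d)) (h ▸ hDbdd)
  have hfront : (frontier D).Nonempty := nonempty_frontier_iff.2 ⟨⟨z0, hz0D⟩, hDne⟩
  have hρpos : ∀ w ∈ D, 0 < rho D w := by
    intro w hw
    refine (isClosed_frontier.notMem_iff_infDist_pos hfront).1 ?_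
    rw [hDopen.frontier_eq]; exact fun h => h.2 hw
  have hballD : ∀ w ∈ D, ball w (rho D w) ⊆ D := by
    intro w hw
    obtain ⟨p, hpf, hpd⟩ := exists_mem_frontier_infDist_compl_eq_dist hw hDne
    have h1 : rho D w ≤ Metric.infDist w Dᶜ := by
      rw [hpd]; exact Metric.infDist_le_dist_of_mem hpf
    exact (ball_subset_ball h1).trans Metric.ball_infDist_compl_subset
  have hρball : ∀ (w : EuclideanSpace ℝ (Fin d)) (t : ℝ), ball w t ⊆ D → t ≤ rho D w := by
    intro w t h
    by_contra hlt
    push_neg at hlt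
    obtain ⟨p, hpf, hpd⟩ := (Metric.infDist_lt_iff hfront).1 hlt
    have hpD : p ∈ D := h (by rw [mem_ball, dist_comm]; exact hpd)
    rw [hDopen.frontier_eq] at hpf
    exact hpf.2 hpD
  have hlip : ∀ a b : EuclideanSpace ℝ (Fin d), rho D a ≤ rho D b + dist a b := fun a b =>
    Metric.infDist_le_infDist_add_dist
  -- the reference point xs at distance rho(z0)/2 from z0
  set xs : EuclideanSpace ℝ (Fin d) := z0 + (rho D z0 / 2) • e with hxs_def
  have hdxs : dist xs z0 = rho D z0 / 2 := by
    rw [hxs_def, dist_eq_norm, add_sub_cancel_left, norm_smul, he, mul_one,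
      Real.norm_eq_abs, abs_of_pos (half_pos hρz0pos)]
  have hxsD : xs ∈ D := hballD z0 hz0D (by rw [mem_ball, hdxs]; linarith)
  have hxs_ne : xs ≠ z0 := by
    intro h; rw [h, dist_self] at hdxs; linarith
  have hρxs : rho D z0 / 2 ≤ rho D xs := by
    have := hlip z0 xs
    rw [dist_comm, hdxs] at this; linarith
  have hxs_out : xs ∉ ball z0 (rho D z0 / 2) := by
    rw [mem_ball, hdxs]; exact lt_irrefl _
  -- lower bound on G xs z0
  have h2inv : ((2:ℝ)⁻¹) ^ (α - (d:ℝ)) = (2:ℝ) ^ ((d:ℝ) - α) := by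
    rw [Real.inv_rpow (by norm_num : (0:ℝ) ≤ 2), ← Real.rpow_neg (by norm_num : (0:ℝ) ≤ 2), neg_sub]
  have hrpow : (rho D z0 / 2) ^ (α - (d:ℝ)) = rho D z0 ^ (α - (d:ℝ)) * (2:ℝ) ^ ((d:ℝ) - α) := by
    rw [div_eq_mul_inv, Real.mul_rpow hρz0pos.le (by norm_num : (0:ℝ) ≤ 2⁻¹), h2inv]
  have hGxs : C1 / C0 ^ 2 ≤ G xs z0 := by
    have h := hGlow xs hxsD z0 hz0D hxs_ne (le_of_eq hdxs)
    rw [hdxs, hrpow] at h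
    have heq : C1 / C0 ^ 2 = C0⁻¹ * (rho D z0 ^ (α - (d:ℝ)) * (2:ℝ) ^ ((d:ℝ) - α)) := by
      rw [hC1]; field_simp
    rw [heq]; exact h
  have hC1pos : 0 < C1 := by
    rw [hC1]
    have h1 : (0:ℝ) < (2:ℝ) ^ ((d:ℝ) - α) := Real.rpow_pos_of_pos (by norm_num) _
    have h2 : (0:ℝ) < rho D z0 ^ (α - (d:ℝ)) := Real.rpow_pos_of_pos hρz0pos _
    positivity
  -- Harnack constant for a single big L
  set m0 : ℝ := min (rho D z0 / 2) (ε1 / (2 * M)) with hm0_def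
  have hm0pos : 0 < m0 := lt_min (half_pos hρz0pos) (by positivity)
  set L : ℝ := 30 / κ + (Metric.diam D + rho D z0) / m0 + 1 with hL_def
  have hdiam_nonneg : 0 ≤ Metric.diam D := Metric.diam_nonneg
  have hLpos : 0 < L := by
    have h1 : 0 ≤ 30 / κ := by positivity
    have h2 : 0 ≤ (Metric.diam D + rho D z0) / m0 := by positivity
    rw [hL_def]; linarith
  obtain ⟨cH, hcH0, hHar⟩ := hHarnack L hLpos
  set cH' : ℝ := max cH 1 with hcH'_def
  have hcH'1 : (1:ℝ) ≤ cH' := le_max_right _ _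
  have hcHle : cH ≤ cH' := le_max_left _ _
  have hcH'pos : 0 < cH' := lt_of_lt_of_le one_pos hcH'1
  -- the final constant
  refine ⟨C0 ^ 2 * cH' * cC, by positivity, ?_⟩
  set c : ℝ := C0 ^ 2 * cH' * cC with hc_def
  have hC02 : (1:ℝ) ≤ C0 ^ 2 := one_le_pow₀ hC0
  have hK1 : (1:ℝ) ≤ C0 ^ 2 * cH' :=
    le_trans hC02 (le_mul_of_one_le_right (by positivity) hcH'1)
  have hc1 : (1:ℝ) ≤ c := by
    rw [hc_def]
    exact le_trans hK1 (le_mul_of_one_le_right (by positivity) hcC1.le)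
  intro x hx y hy z hz hrzle Axy hAxy Ayz hAyz
  -- generic facts about gfun
  have hgle : ∀ w, gfun G z0 C1 w ≤ C1 := by
    intro w; rw [gfun]; split_ifs; exacts [le_rfl, min_le_right _ _]
  have hgz0 : gfun G z0 C1 z0 = C1 := by rw [gfun, if_pos rfl]
  have hgnn : ∀ w ∈ D, 0 ≤ gfun G z0 C1 w := by
    intro w hw; rw [gfun]; split_ifs with h
    · exact hC1pos.le
    · exact le_min (hGpos w hw z0 hz0D h).le hC1pos.le
  have hgmul : ∀ (w1 w2 : EuclideanSpace ℝ (Fin d)) (k : ℝ), w1 ≠ z0 → w2 ≠ z0 → (1:ℝ) ≤ k →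
      G w1 z0 ≤ k * G w2 z0 → gfun G z0 C1 w1 ≤ k * gfun G z0 C1 w2 := by
    intro w1 w2 k h1 h2 hk h
    rw [gfun, gfun, if_neg h1, if_neg h2, mul_min_of_nonneg _ _ (by linarith : (0:ℝ) ≤ k)]
    exact min_le_min h (le_mul_of_one_le_left hC1pos.le hk)
  set r1 : ℝ := rxy D x y with hr1_def
  set r2 : ℝ := rxy D y z with hr2_def
  have hρy : 0 < rho D y := hρpos y hy
  have hρyr1 : rho D y ≤ r1 := le_trans (le_max_right _ _) (le_max_left _ _)
  have hρyr2 : rho D y ≤ r2 := le_trans (le_max_left _ _) (le_max_left _ _)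
  have hr1pos : 0 < r1 := lt_of_lt_of_le hρy hρyr1
  have hr2pos : 0 < r2 := lt_of_lt_of_le hρy hρyr2
  -- r1 ≤ 2 * r2
  have hr12 : r1 ≤ 2 * r2 := by
    have hρx : rho D x ≤ rxy D x z := le_trans (le_max_left _ _) (le_max_left _ _)
    have hdxz : dist x z ≤ rxy D x z := le_max_right _ _
    have hdyz : dist y z ≤ r2 := le_max_right _ _
    have hdxy : dist x y ≤ dist x z + dist z y := dist_triangle x z y
    rw [dist_comm z y] at hdxy
    refine max_le (max_le (by linarith) (by linarith)) (by linarith)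
  by_cases hB : r2 < ε1
  · -- r2 < ε1 : Ayz is a genuine point of 𝓑(y,z)
    have hAyz' : Ayz ∈ D ∧ r2 / M < rho D Ayz ∧ max (dist y Ayz) (dist z Ayz) < 5 * r2 := by
      rw [BB, if_pos hB] at hAyz; exact hAyz
    obtain ⟨hA2D, hρA2, hdA2⟩ := hAyz'
    have hdyA2 : dist y Ayz < 5 * r2 := lt_of_le_of_lt (le_max_left _ _) hdA2
    have hρA2κ : κ * r2 / 2 < rho D Ayz := by rw [← hdivM]; exact hρA2
    have hρA2lt : rho D Ayz < 6 * r2 := by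
      have := hlip Ayz y
      rw [dist_comm Ayz y] at this
      linarith
    have h6ε : 6 * r2 < κ * R / 4 := by linarith
    have hA2dist : rho D z0 / 2 < dist Ayz z0 := by
      have := hlip z0 Ayz
      rw [dist_comm z0 Ayz] at this
      linarith
    have hA2out : Ayz ∉ ball z0 (rho D z0 / 2) := by
      rw [mem_ball]; linarith
    have hA2ne : Ayz ≠ z0 := by
      intro h; rw [h, dist_self] at hA2dist; linarith
    have hgA2nn : 0 ≤ gfun G z0 C1 Ayz := hgnn Ayz hA2D
    by_cases hB1 : r1 < ε1
    · -- both radii small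
      have hAxy' : Axy ∈ D ∧ r1 / M < rho D Axy ∧ max (dist x Axy) (dist y Axy) < 5 * r1 := by
        rw [BB, if_pos hB1] at hAxy; exact hAxy
      obtain ⟨hA1D, hρA1, hdA1⟩ := hAxy'
      have hdyA1 : dist y Axy < 5 * r1 := lt_of_le_of_lt (le_max_right _ _) hdA1
      have hρA1κ : κ * r1 / 2 < rho D Axy := by rw [← hdivM]; exact hρA1
      have hρA1lt : rho D Axy < 6 * r1 := by
        have := hlip Axy y
        rw [dist_comm Axy y] at this
        linarith
      have hA1dist : rho D z0 / 2 < dist Axy z0 := by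
        have := hlip z0 Axy
        rw [dist_comm z0 Axy] at this
        linarith
      have hA1out : Axy ∉ ball z0 (rho D z0 / 2) := by rw [mem_ball]; linarith
      have hA1ne : Axy ≠ z0 := by
        intro h; rw [h, dist_self] at hA1dist; linarith
      have hL30 : 30 / κ ≤ L := by
        have h2 : 0 ≤ (Metric.diam D + rho D z0) / m0 := by positivity
        rw [hL_def]; linarith
      by_cases hab : r1 ≤ r2
      · -- use Carleson at Q := Qb y with radius 6*r2, then Harnack
        obtain ⟨hQf, hQd⟩ := hQb y hy
        set Q := Qb y with hQ_def
        have h6pos : 0 < 6 * r2 := by linarith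
        have h6R : 6 * r2 < R := by
          have hκR2 : κ * R ≤ R / 2 * 1 := by
            calc κ * R ≤ 1 / 2 * R := mul_le_mul_of_nonneg_right hκ2 hR.le
              _ = R / 2 * 1 := by ring
          linarith
        obtain ⟨hB2D, hB2ball⟩ := hfat Q hQf (6 * r2) h6pos h6R
        set B2 := A Q (6 * r2) with hB2_def
        have hρB2 : κ * (6 * r2) ≤ rho D B2 :=
          hρball B2 _ (hB2ball.trans inter_subset_left)
        have hdB2Q : dist B2 Q < 6 * r2 := by
          have := hB2ball (mem_ball_self (by positivity))
          exact mem_ball.1 this.2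
        have hρQ : rho D Q = 0 := Metric.infDist_zero_of_mem hQf
        have hρB2lt : rho D B2 < 6 * r2 := by
          have := hlip B2 Q
          rw [hρQ] at this
          linarith
        have hdz0Q : rho D z0 ≤ dist z0 Q := Metric.infDist_le_dist_of_mem hQf
        have hz0mem : z0 ∈ D \ closure (ball Q (4 * (6 * r2))) := by
          refine ⟨hz0D, fun hmem => ?_⟩
          have := Metric.closure_ball_subset_closedBall hmem
          rw [Metric.mem_closedBall] at this
          linarith
        have hA1mem : Axy ∈ D ∩ ball Q (6 * r2) := by
          refine ⟨hA1D, ?_⟩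
          rw [mem_ball]
          have ht : dist Axy Q ≤ dist Axy y + dist y Q := dist_triangle _ _ _
          rw [dist_comm Axy y] at ht
          rw [hQd] at ht
          linarith
        have hCar := hCarl Q hQf (6 * r2) h6pos h6ε z0 hz0mem Axy hA1mem
        -- B2 is away from z0
        have hB2dist : rho D z0 / 2 < dist B2 z0 := by
          have := hlip z0 B2
          rw [dist_comm z0 B2] at this
          linarith
        have hB2out : B2 ∉ ball z0 (rho D z0 / 2) := by rw [mem_ball]; linarith
        have hB2ne : B2 ≠ z0 := by
          intro h; rw [h, dist_self] at hB2dist; linarith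
        -- Harnack between Ayz and B2
        have hmin : κ * r2 / 2 ≤ min (rho D Ayz) (rho D B2) := by
          refine le_min hρA2κ.le (le_trans ?_ hρB2)
          have hkr : 0 < κ * r2 := mul_pos hκ0 hr2pos
          rw [show κ * (6 * r2) = 6 * (κ * r2) by ring]
          linarith
        have hdistAB : dist Ayz B2 ≤ L * min (rho D Ayz) (rho D B2) := by
          have ht1 : dist Ayz B2 ≤ dist Ayz y + dist y B2 := dist_triangle _ _ _
          have ht2 : dist y B2 ≤ dist y Q + dist Q B2 := dist_triangle _ _ _
          rw [dist_comm Ayz y] at ht1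
          rw [hQd, dist_comm Q B2] at ht2
          have h12 : dist Ayz B2 ≤ 12 * r2 := by linarith
          have h15 : (12:ℝ) * r2 ≤ (30 / κ) * (κ * r2 / 2) := by
            have : (30 / κ) * (κ * r2 / 2) = 15 * r2 := by field_simp; ring
            rw [this]; linarith
          calc dist Ayz B2 ≤ (30 / κ) * (κ * r2 / 2) := by linarith
            _ ≤ L * min (rho D Ayz) (rho D B2) :=
                mul_le_mul hL30 hmin (by positivity) hLpos.le
        have hHar2 := hHar z0 hz0D Ayz ⟨hA2D, hA2out⟩ B2 ⟨hB2D, hB2out⟩ hdistAB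
        -- combine
        have hGA2pos : 0 < G Ayz z0 := hGpos Ayz hA2D z0 hz0D hA2ne
        have hchain : G Axy z0 ≤ (cC * cH') * G Ayz z0 := by
          calc G Axy z0 ≤ cC * G B2 z0 := hCar
            _ ≤ cC * (cH * G Ayz z0) := by
                refine mul_le_mul_of_nonneg_left hHar2 (by linarith)
            _ ≤ (cC * cH') * G Ayz z0 := by
                rw [mul_assoc]
                refine mul_le_mul_of_nonneg_left (mul_le_mul_of_nonneg_right hcHle hGA2pos.le)
                  (by linarith)
        have hk1 : (1:ℝ) ≤ cC * cH' :=
          le_trans hcC1.le (le_mul_of_one_le_right (by linarith) hcH'1)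
        have := hgmul Axy Ayz (cC * cH') hA1ne hA2ne hk1 hchain
        refine le_trans this ?_
        refine mul_le_mul_of_nonneg_right ?_ hgA2nn
        rw [hc_def]
        calc cC * cH' ≤ C0 ^ 2 * (cC * cH') := le_mul_of_one_le_left (by positivity) hC02
          _ = C0 ^ 2 * cH' * cC := by ring
      · -- r2 < r1 ≤ 2 r2 : direct Harnack between Ayz and Axy
        push_neg at hab
        have hmin : κ * r2 / 2 ≤ min (rho D Ayz) (rho D Axy) := by
          refine le_min hρA2κ.le (le_trans ?_ hρA1κ.le)
          have : κ * r2 ≤ κ * r1 := mul_le_mul_of_nonneg_left hab.le hκ0.le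
          linarith
        have hdistAB : dist Ayz Axy ≤ L * min (rho D Ayz) (rho D Axy) := by
          have ht1 : dist Ayz Axy ≤ dist Ayz y + dist y Axy := dist_triangle _ _ _
          rw [dist_comm Ayz y] at ht1
          have h15 : dist Ayz Axy ≤ 15 * r2 := by linarith
          have h30 : (15:ℝ) * r2 ≤ (30 / κ) * (κ * r2 / 2) := by
            have : (30 / κ) * (κ * r2 / 2) = 15 * r2 := by field_simp; ring
            rw [this]
          calc dist Ayz Axy ≤ (30 / κ) * (κ * r2 / 2) := by linarith
            _ ≤ L * min (rho D Ayz) (rho D Axy) :=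
                mul_le_mul hL30 hmin (by positivity) hLpos.le
        have hHar2 := hHar z0 hz0D Ayz ⟨hA2D, hA2out⟩ Axy ⟨hA1D, hA1out⟩ hdistAB
        have hGA2pos : 0 < G Ayz z0 := hGpos Ayz hA2D z0 hz0D hA2ne
        have hchain : G Axy z0 ≤ cH' * G Ayz z0 :=
          le_trans hHar2 (mul_le_mul_of_nonneg_right hcHle hGA2pos.le)
        have := hgmul Axy Ayz cH' hA1ne hA2ne hcH'1 hchain
        refine le_trans this ?_
        refine mul_le_mul_of_nonneg_right ?_ hgA2nn
        rw [hc_def]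
        calc cH' ≤ C0 ^ 2 * cH' := le_mul_of_one_le_left hcH'pos.le hC02
          _ ≤ C0 ^ 2 * cH' * cC := le_mul_of_one_le_right (by positivity) hcC1.le
    · -- r1 ≥ ε1 : Axy = z0
      push_neg at hB1
      have hAxy0 : Axy = z0 := by
        rw [BB, if_neg (not_lt.2 hB1)] at hAxy
        exact hAxy
      rw [hAxy0, hgz0]
      -- lower bound for g(Ayz) via Harnack with xs
      have hr2half : ε1 / 2 ≤ r2 := by linarith
      have hm0A2 : m0 ≤ rho D Ayz := by
        have h1 : m0 ≤ ε1 / (2 * M) := min_le_right _ _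
        have h2 : ε1 / (2 * M) ≤ r2 / M := by
          rw [div_le_div_iff₀ (by positivity) hMpos]
          calc ε1 * M ≤ (2 * r2) * M := mul_le_mul_of_nonneg_right (by linarith) hMpos.le
            _ = r2 * (2 * M) := by ring
        linarith [hρA2.le]
      have hm0xs : m0 ≤ rho D xs := le_trans (min_le_left _ _) hρxs
      have hdist : dist Ayz xs ≤ L * min (rho D Ayz) (rho D xs) := by
        have ht : dist Ayz xs ≤ dist Ayz z0 + dist z0 xs := dist_triangle _ _ _
        rw [dist_comm z0 xs, hdxs] at ht
        have hdd : dist Ayz z0 ≤ Metric.diam D := Metric.dist_le_diam_of_mem hDbdd hA2D hz0D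
        have hLm0 : Metric.diam D + rho D z0 ≤ L * m0 := by
          have hLge : (Metric.diam D + rho D z0) / m0 ≤ L := by
            have h30 : 0 ≤ 30 / κ := by positivity
            rw [hL_def]; linarith
          have h4 := mul_le_mul_of_nonneg_right hLge hm0pos.le
          rwa [div_mul_cancel₀ _ hm0pos.ne'] at h4
        have hmge : m0 ≤ min (rho D Ayz) (rho D xs) := le_min hm0A2 hm0xs
        calc dist Ayz xs ≤ Metric.diam D + rho D z0 := by linarith
          _ ≤ L * m0 := hLm0
          _ ≤ L * min (rho D Ayz) (rho D xs) :=
              mul_le_mul_of_nonneg_left hmge hLpos.le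
      have hHar2 := hHar z0 hz0D Ayz ⟨hA2D, hA2out⟩ xs ⟨hxsD, hxs_out⟩ hdist
      have hGA2pos : 0 < G Ayz z0 := hGpos Ayz hA2D z0 hz0D hA2ne
      -- C1 / C0^2 ≤ G xs z0 ≤ cH * G Ayz z0 ≤ cH' * G Ayz z0
      have hGA2low : C1 / (C0 ^ 2 * cH') ≤ G Ayz z0 := by
        have h1 : C1 / C0 ^ 2 ≤ cH' * G Ayz z0 := by
          calc C1 / C0 ^ 2 ≤ G xs z0 := hGxs
            _ ≤ cH * G Ayz z0 := hHar2
            _ ≤ cH' * G Ayz z0 := mul_le_mul_of_nonneg_right hcHle hGA2pos.le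
        rw [div_le_iff₀ (by positivity)]
        rw [div_le_iff₀ (by positivity)] at h1
        calc C1 ≤ cH' * G Ayz z0 * C0 ^ 2 := h1
          _ = G Ayz z0 * (C0 ^ 2 * cH') := by ring
      have hgA2low : C1 / (C0 ^ 2 * cH') ≤ gfun G z0 C1 Ayz := by
        rw [gfun, if_neg hA2ne]
        refine le_min hGA2low ?_
        calc C1 / (C0 ^ 2 * cH') ≤ C1 / 1 := by
              refine div_le_div_of_nonneg_left hC1pos.le one_pos ?_ |>.trans_eq ?_
              · exact hK1
              · rfl
          _ = C1 := div_one C1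
      calc C1 = (C0 ^ 2 * cH') * (C1 / (C0 ^ 2 * cH')) := by field_simp
        _ ≤ (C0 ^ 2 * cH') * gfun G z0 C1 Ayz :=
            mul_le_mul_of_nonneg_left hgA2low (by positivity)
        _ ≤ c * gfun G z0 C1 Ayz := by
            refine mul_le_mul_of_nonneg_right ?_ hgA2nn
            rw [hc_def]
            exact le_mul_of_one_le_right (by positivity) hcC1.le
  · -- r2 ≥ ε1 : Ayz = z0
    push_neg at hB
    have hAyz0 : Ayz = z0 := by
      rw [BB, if_neg (not_lt.2 hB)] at hAyz
      exact hAyz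
    rw [hAyz0, hgz0]
    calc gfun G z0 C1 Axy ≤ C1 := hgle Axy
      _ ≤ c * C1 := le_mul_of_one_le_left hC1pos.le hc1
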